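/- Let 𝒶 ∈ ℝ \ {-1, 1} and define a(x) = max{x, 𝒶x}. Then for every x ∈ ℝ, (|1-𝒶|/((1-𝒶)(1-𝒶²))) · [𝒶 · a(-|1-𝒶|x/(1-𝒶)) + a(|1-𝒶|x/(1-𝒶))] = max{x, 0}. -/

import Mathlib

theorem stmt_1 (𝒶 : ℝ) (h𝒶 : 𝒶 ≠ 1 ∧ 𝒶 ≠ -1) (a : ℝ → ℝ)
    (ha : ∀ x : ℝ, a x = max x (𝒶 * x)) (x : ℝ) :
    (|1 - 𝒶| / ((1 - 𝒶) * (1 - 𝒶 ^ 2))) *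
      (𝒶 * a (-|1 - 𝒶| * x / (1 - 𝒶)) + a (|1 - 𝒶| * x / (1 - 𝒶))) = max x 0 := by
  obtain ⟨h1, h2⟩ := h𝒶
  rw [ha, ha]
  have hsq : 1 - 𝒶 ^ 2 ≠ 0 := by
    intro hc
    have : (1 - 𝒶) * (1 + 𝒶) = 0 := by nlinarith
    rcases mul_eq_zero.1 this with h' | h' <;> [(apply h1; linarith); (apply h2; linarith)]
  rcases lt_or_gt_of_ne h1 with h | h
  · -- 𝒶 < 1
    have habs : |1 - 𝒶| = 1 - 𝒶 := abs_of_pos (by linarith)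
    have hne : (1 : ℝ) - 𝒶 ≠ 0 := by linarith
    rw [habs]
    have e1 : -(1 - 𝒶) * x / (1 - 𝒶) = -x := by field_simp
    have e2 : (1 - 𝒶) * x / (1 - 𝒶) = x := by field_simp
    rw [e1, e2]
    rcases le_or_gt 0 x with hx | hx
    · rw [max_eq_right (show -x ≤ 𝒶 * -x by nlinarith),
        max_eq_left (show 𝒶 * x ≤ x by nlinarith), max_eq_left hx]
      field_simp
      ring
    · rw [max_eq_left (show 𝒶 * -x ≤ -x by nlinarith),
        max_eq_right (show x ≤ 𝒶 * x by nlinarith), max_eq_right hx.le]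
      field_simp
      ring
  · -- 𝒶 > 1
    have habs : |1 - 𝒶| = 𝒶 - 1 := by rw [abs_of_neg (by linarith)]; ring
    have hne : (1 : ℝ) - 𝒶 ≠ 0 := by linarith
    rw [habs]
    have e1 : -(𝒶 - 1) * x / (1 - 𝒶) = x := by field_simp; ring
    have e2 : (𝒶 - 1) * x / (1 - 𝒶) = -x := by field_simp; ring
    rw [e1, e2]
    rcases le_or_gt 0 x with hx | hx
    · rw [max_eq_right (show x ≤ 𝒶 * x by nlinarith),
        max_eq_left (show 𝒶 * -x ≤ -x by nlinarith), max_eq_left hx]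
      field_simp
      ring
    · rw [max_eq_left (show 𝒶 * x ≤ x by nlinarith),
        max_eq_right (show -x ≤ 𝒶 * -x by nlinarith), max_eq_right hx.le]
      field_simp
      ring
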